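/- For every natural number n ≥ 30, the open interval (5n/6, n) contains a prime number. -/

import Mathlib

open Finset Nat ArithmeticFunction
namespace Nagura


/-- key: log (n+1) - log n bounds -/
lemma log_succ_sub (n : ℕ) (hn : 1 ≤ n) :
    1 / ((n:ℝ)+1) ≤ Real.log ((n:ℝ)+1) - Real.log n ∧
    Real.log ((n:ℝ)+1) - Real.log n ≤ 1 / (n:ℝ) := by
  have hn0 : (0:ℝ) < n := by exact_mod_cast hn
  have h1 : Real.log ((n:ℝ)+1) - Real.log n = Real.log (((n:ℝ)+1)/n) := by
    rw [Real.log_div (by positivity) (by positivity)]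
  constructor
  · have h2 : Real.log ((n:ℝ)/((n:ℝ)+1)) ≤ (n:ℝ)/((n:ℝ)+1) - 1 :=
      Real.log_le_sub_one_of_pos (by positivity)
    have h3 : Real.log ((n:ℝ)/((n:ℝ)+1)) = Real.log n - Real.log ((n:ℝ)+1) := by
      rw [Real.log_div (by positivity) (by positivity)]
    have : (n:ℝ)/((n:ℝ)+1) - 1 = -(1/((n:ℝ)+1)) := by field_simp; ring
    linarith [h2, h3.symm.trans_le (le_of_eq rfl)]
  · have h2 : Real.log (((n:ℝ)+1)/n) ≤ ((n:ℝ)+1)/n - 1 :=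
      Real.log_le_sub_one_of_pos (by positivity)
    have : ((n:ℝ)+1)/n - 1 = 1/(n:ℝ) := by field_simp; ring
    linarith [h1, h2]

lemma log_factorial_ge (n : ℕ) (hn : 1 ≤ n) :
    (n:ℝ) * Real.log n - n + 1 ≤ Real.log (n !) := by
  induction n, hn using Nat.le_induction with
  | base => simp
  | succ n hn ih =>
    have hf : Real.log ((n+1)! ) = Real.log (n !) + Real.log ((n:ℝ)+1) := by
      rw [Nat.factorial_succ, Nat.cast_mul, Real.log_mul (by positivity)
        (by positivity)]
      push_cast; ring
    have key := (log_succ_sub n hn).2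
    have hn0 : (0:ℝ) < n := by exact_mod_cast hn
    have : (n:ℝ) * (Real.log ((n:ℝ)+1) - Real.log n) ≤ 1 := by
      calc (n:ℝ) * (Real.log ((n:ℝ)+1) - Real.log n) ≤ (n:ℝ) * (1/(n:ℝ)) := by
            apply mul_le_mul_of_nonneg_left key (by positivity)
        _ = 1 := by field_simp
    push_cast
    push_cast at ih hf
    nlinarith [ih, hf, this]

lemma log_factorial_le (n : ℕ) (hn : 1 ≤ n) :
    Real.log (n !) ≤ (n:ℝ) * Real.log n - n + 1 + Real.log n := by
  induction n, hn using Nat.le_induction with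
  | base => simp
  | succ n hn ih =>
    have hf : Real.log ((n+1)! ) = Real.log (n !) + Real.log ((n:ℝ)+1) := by
      rw [Nat.factorial_succ, Nat.cast_mul, Real.log_mul (by positivity)
        (by positivity)]
      push_cast; ring
    have key := (log_succ_sub n hn).1
    have hn0 : (0:ℝ) < n := by exact_mod_cast hn
    have : 1 ≤ ((n:ℝ)+1) * (Real.log ((n:ℝ)+1) - Real.log n) := by
      calc (1:ℝ) = ((n:ℝ)+1) * (1/((n:ℝ)+1)) := by field_simp
        _ ≤ ((n:ℝ)+1) * (Real.log ((n:ℝ)+1) - Real.log n) := by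
            apply mul_le_mul_of_nonneg_left key (by positivity)
    push_cast
    push_cast at ih hf
    nlinarith [ih, hf, this]



lemma sum_divisors_swap (f : ℕ → ℝ) (n : ℕ) :
    ∑ m ∈ Icc 1 n, ∑ d ∈ m.divisors, f d
      = ∑ d ∈ Icc 1 n, ((n / d : ℕ) : ℝ) * f d := by
  induction n with
  | zero => simp
  | succ n ih =>
    have hins : Icc 1 (n+1) = insert (n+1) (Icc 1 n) := by
      ext x
      simp only [Finset.mem_Icc, Finset.mem_insert]
      omega
    have hnotmem : (n+1) ∉ Icc 1 n := by simp
    have hdiv : (n+1).divisors = insert (n+1) ((Icc 1 n).filter (· ∣ n+1)) := by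
      rw [Nat.divisors]
      rw [show Finset.Ico 1 (n+1+1) = insert (n+1) (Icc 1 n) by
        rw [Finset.Ico_add_one_right_eq_Icc]; exact hins]
      rw [Finset.filter_insert]
      simp [Finset.Ico_add_one_right_eq_Icc]
    rw [hins, Finset.sum_insert hnotmem, Finset.sum_insert hnotmem, ih, hdiv,
      Finset.sum_insert (by simp)]
    have hstep : ∀ d ∈ Icc 1 n, (((n+1) / d : ℕ) : ℝ) * f d
        = ((n / d : ℕ) : ℝ) * f d + (if d ∣ n+1 then f d else 0) := by
      intro d hd
      rw [Nat.succ_div]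
      split <;> push_cast <;> ring
    rw [Finset.sum_congr rfl hstep, Finset.sum_add_distrib, ← Finset.sum_filter]
    have : ((n+1) / (n+1) : ℕ) = 1 := Nat.div_self (by omega)
    rw [this]
    push_cast
    ring

lemma log_factorial_eq_sum (n : ℕ) :
    Real.log (n !) = ∑ d ∈ Icc 1 n, ((n / d : ℕ) : ℝ) * Λ d := by
  rw [← sum_divisors_swap]
  have h1 : ((n ! : ℕ) : ℝ) = ∏ m ∈ Icc 1 n, (m : ℝ) := by
    rw [← Finset.prod_Ico_id_eq_factorial, ← Finset.Ico_add_one_right_eq_Icc]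
    push_cast
    rfl
  rw [h1, Real.log_prod (s := Icc 1 n) (f := fun m : ℕ => (m:ℝ)) (by intro x hx; simp at hx; exact Nat.cast_ne_zero.mpr (by omega))]
  refine Finset.sum_congr rfl fun m hm => ?_
  rw [← ArithmeticFunction.vonMangoldt_sum]

/-- Chebyshev psi function -/
noncomputable def psi (n : ℕ) : ℝ := ∑ m ∈ Icc 1 n, Λ m

lemma psi_nonneg (n : ℕ) : 0 ≤ psi n :=
  Finset.sum_nonneg fun _ _ => vonMangoldt_nonneg

lemma psi_mono {a b : ℕ} (h : a ≤ b) : psi a ≤ psi b :=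
  Finset.sum_le_sum_of_subset_of_nonneg (Finset.Icc_subset_Icc_right h)
    (fun _ _ _ => vonMangoldt_nonneg)

lemma psi_sub {a b : ℕ} (h : a ≤ b) :
    psi a + ∑ d ∈ Icc (a+1) b, Λ d = psi b := by
  unfold psi
  rw [← Finset.Ico_add_one_right_eq_Icc, ← Finset.Ico_add_one_right_eq_Icc, ← Finset.Ico_add_one_right_eq_Icc]
  exact Finset.sum_Ico_consecutive _ (by omega) (by omega)

lemma psi_le_log_factorial (n : ℕ) : psi n ≤ Real.log (n !) := by
  rw [log_factorial_eq_sum]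
  refine Finset.sum_le_sum fun d hd => ?_
  simp only [Finset.mem_Icc] at hd
  have h1 : 1 ≤ n / d := (Nat.one_le_div_iff (by omega)).mpr hd.2
  have : (1:ℝ) ≤ ((n/d : ℕ):ℝ) := by exact_mod_cast h1
  nlinarith [vonMangoldt_nonneg (n := d)]



-- For testing compile, we re-declare needed items via import of actual file later.

/-- the weight of the mod-30 Chebyshev combination -/
noncomputable def w (m d : ℕ) : ℝ :=
  ((30*m/d : ℕ) : ℝ) + ((30*m/d/30 : ℕ) : ℝ) - ((30*m/d/2 : ℕ) : ℝ)
    - ((30*m/d/3 : ℕ) : ℝ) - ((30*m/d/5 : ℕ) : ℝ)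

noncomputable def Lc (m : ℕ) : ℝ :=
  Real.log ((30*m)!) + Real.log (m !) - Real.log ((15*m)!)
    - Real.log ((10*m)!) - Real.log ((6*m)!)

lemma div_tricks (m d : ℕ) (hd : 0 < d) :
    30*m/d/30 = m/d ∧ 30*m/d/2 = 15*m/d ∧ 30*m/d/3 = 10*m/d ∧ 30*m/d/5 = 6*m/d := by
  refine ⟨?_, ?_, ?_, ?_⟩
  · rw [Nat.div_div_eq_div_mul, mul_comm d 30, Nat.mul_div_mul_left _ _ (by norm_num)]
  · rw [Nat.div_div_eq_div_mul, mul_comm d 2, show 30*m = 2*(15*m) by ring,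
      Nat.mul_div_mul_left _ _ (by norm_num)]
  · rw [Nat.div_div_eq_div_mul, mul_comm d 3, show 30*m = 3*(10*m) by ring,
      Nat.mul_div_mul_left _ _ (by norm_num)]
  · rw [Nat.div_div_eq_div_mul, mul_comm d 5, show 30*m = 5*(6*m) by ring,
      Nat.mul_div_mul_left _ _ (by norm_num)]

lemma sum_extend (k n : ℕ) (hk : k ≤ n) :
    ∑ d ∈ Icc 1 k, ((k / d : ℕ) : ℝ) * Λ d = ∑ d ∈ Icc 1 n, ((k / d : ℕ) : ℝ) * Λ d := by
  refine Finset.sum_subset (Finset.Icc_subset_Icc_right hk) fun d hd hnd => ?_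
  simp only [Finset.mem_Icc] at hd hnd
  have : k / d = 0 := Nat.div_eq_of_lt (by omega)
  rw [this]
  simp

lemma Lc_eq (m : ℕ) : Lc m = ∑ d ∈ Icc 1 (30*m), Λ d * w m d := by
  unfold Lc
  rw [log_factorial_eq_sum (30*m), log_factorial_eq_sum m, log_factorial_eq_sum (15*m),
    log_factorial_eq_sum (10*m), log_factorial_eq_sum (6*m),
    sum_extend m (30*m) (by omega), sum_extend (15*m) (30*m) (by omega),
    sum_extend (10*m) (30*m) (by omega), sum_extend (6*m) (30*m) (by omega)]
  rw [← Finset.sum_add_distrib]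
  simp only [← Finset.sum_sub_distrib]
  refine Finset.sum_congr rfl fun d hd => ?_
  simp only [Finset.mem_Icc] at hd
  obtain ⟨h30, h2, h3, h5⟩ := div_tricks m d (by omega)
  unfold w
  rw [h30, h2, h3, h5]
  ring

lemma w_nonneg (m d : ℕ) : 0 ≤ w m d := by
  unfold w
  have h : 30*m/d/2 + 30*m/d/3 + 30*m/d/5 ≤ 30*m/d + 30*m/d/30 := by omega
  have h' : ((30*m/d/2 : ℕ) : ℝ) + ((30*m/d/3 : ℕ) : ℝ) + ((30*m/d/5 : ℕ) : ℝ)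
      ≤ ((30*m/d : ℕ) : ℝ) + ((30*m/d/30 : ℕ) : ℝ) := by exact_mod_cast h
  linarith

lemma w_le_one (m d : ℕ) : w m d ≤ 1 := by
  unfold w
  have h : 30*m/d + 30*m/d/30 ≤ 30*m/d/2 + 30*m/d/3 + 30*m/d/5 + 1 := by omega
  have h' : ((30*m/d : ℕ) : ℝ) + ((30*m/d/30 : ℕ) : ℝ)
      ≤ ((30*m/d/2 : ℕ) : ℝ) + ((30*m/d/3 : ℕ) : ℝ) + ((30*m/d/5 : ℕ) : ℝ) + 1 := by
    exact_mod_cast h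
  linarith

lemma w_eq_one {m d : ℕ} (h : (1 ≤ 30*m/d ∧ 30*m/d ≤ 5) ∨ (7 ≤ 30*m/d ∧ 30*m/d ≤ 9)) :
    w m d = 1 := by
  unfold w
  have h' : 30*m/d + 30*m/d/30 = 30*m/d/2 + 30*m/d/3 + 30*m/d/5 + 1 := by omega
  have h'' : ((30*m/d : ℕ) : ℝ) + ((30*m/d/30 : ℕ) : ℝ)
      = ((30*m/d/2 : ℕ) : ℝ) + ((30*m/d/3 : ℕ) : ℝ) + ((30*m/d/5 : ℕ) : ℝ) + 1 := by
    exact_mod_cast h'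
  linarith

lemma Lc_le_psi (m : ℕ) : Lc m ≤ psi (30*m) := by
  rw [Lc_eq]
  unfold psi
  refine Finset.sum_le_sum fun d hd => ?_
  nlinarith [w_le_one m d, vonMangoldt_nonneg (n := d), w_nonneg m d]

lemma psi_pieces_le_Lc (m : ℕ) (hm : 1 ≤ m) :
    (psi (30*m) - psi (5*m)) + (psi (30*m/7) - psi (3*m)) ≤ Lc m := by
  rw [Lc_eq]
  have hsub1 : psi (30*m) - psi (5*m) = ∑ d ∈ Icc (5*m+1) (30*m), Λ d := by
    have := psi_sub (a := 5*m) (b := 30*m) (by omega); linarith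
  have hsub2 : psi (30*m/7) - psi (3*m) = ∑ d ∈ Icc (3*m+1) (30*m/7), Λ d := by
    have := psi_sub (a := 3*m) (b := 30*m/7) (by omega); linarith
  rw [hsub1, hsub2]
  have hdisj : Disjoint (Icc (5*m+1) (30*m)) (Icc (3*m+1) (30*m/7)) := by
    rw [Finset.disjoint_left]
    intro a ha hb
    simp only [Finset.mem_Icc] at ha hb
    omega
  rw [← Finset.sum_union hdisj]
  have hsubset : (Icc (5*m+1) (30*m)) ∪ (Icc (3*m+1) (30*m/7)) ⊆ Icc 1 (30*m) := by
    intro a ha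
    simp only [Finset.mem_union, Finset.mem_Icc] at ha ⊢
    omega
  calc ∑ d ∈ (Icc (5*m+1) (30*m)) ∪ (Icc (3*m+1) (30*m/7)), Λ d
      = ∑ d ∈ (Icc (5*m+1) (30*m)) ∪ (Icc (3*m+1) (30*m/7)), Λ d * w m d := by
        refine Finset.sum_congr rfl fun d hd => ?_
        simp only [Finset.mem_union, Finset.mem_Icc] at hd
        rw [w_eq_one, mul_one]
        rcases hd with hd | hd
        · left
          constructor
          · rw [Nat.one_le_div_iff (by omega)]; omega
          · have : 30*m/d < 6 := by
              rw [Nat.div_lt_iff_lt_mul (by omega)]; omega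
            omega
        · right
          constructor
          · rw [Nat.le_div_iff_mul_le (by omega)]
            have : d ≤ 30*m/7 := hd.2
            rw [Nat.le_div_iff_mul_le (by norm_num)] at this
            omega
          · have : 30*m/d < 10 := by
              rw [Nat.div_lt_iff_lt_mul (by omega)]; omega
            omega
    _ ≤ ∑ d ∈ Icc 1 (30*m), Λ d * w m d := by
        refine Finset.sum_le_sum_of_subset_of_nonneg hsubset fun d _ _ => ?_
        exact mul_nonneg vonMangoldt_nonneg (w_nonneg m d)

lemma log3_bounds : 1.09857 ≤ Real.log 3 ∧ Real.log 3 ≤ 1.098616 := by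
  have h2lb := Real.log_two_gt_d9
  have h2ub := Real.log_two_lt_d9
  constructor
  · have h : ((2:ℝ)^84) ≤ 3^53 := by norm_num
    have h' := Real.log_le_log (by positivity) h
    rw [Real.log_pow, Real.log_pow] at h'
    push_cast at h'
    nlinarith
  · have h : ((3:ℝ)^306) ≤ 2^485 := by exact_mod_cast (by decide : (3:ℕ)^306 ≤ 2^485)
    have h' := Real.log_le_log (by positivity) h
    rw [Real.log_pow, Real.log_pow] at h'
    push_cast at h'
    nlinarith

lemma log5_bounds : 1.60937 ≤ Real.log 5 ∧ Real.log 5 ≤ 1.609512 := by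
  have h2lb := Real.log_two_gt_d9
  have h2ub := Real.log_two_lt_d9
  constructor
  · have h : ((2:ℝ)^202) ≤ 5^87 := by norm_num
    have h' := Real.log_le_log (by positivity) h
    rw [Real.log_pow, Real.log_pow] at h'
    push_cast at h'
    nlinarith
  · have h : ((5:ℝ)^59) ≤ 2^137 := by norm_num
    have h' := Real.log_le_log (by positivity) h
    rw [Real.log_pow, Real.log_pow] at h'
    push_cast at h'
    nlinarith

lemma log30_eq : Real.log 30 = Real.log 2 + Real.log 3 + Real.log 5 := by
  rw [show (30:ℝ) = 2*3*5 by norm_num, Real.log_mul (by positivity) (by norm_num),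
    Real.log_mul (by norm_num) (by norm_num)]

lemma log30_bounds : 3.40108 ≤ Real.log 30 ∧ Real.log 30 ≤ 3.40128 := by
  rw [log30_eq]
  have := log3_bounds; have := log5_bounds
  have h2lb := Real.log_two_gt_d9
  have h2ub := Real.log_two_lt_d9
  constructor <;> linarith [log3_bounds.1, log3_bounds.2, log5_bounds.1, log5_bounds.2]

lemma C_bounds : 27.638 ≤ 14*Real.log 2 + 9*Real.log 3 + 5*Real.log 5 ∧
    14*Real.log 2 + 9*Real.log 3 + 5*Real.log 5 ≤ 27.6392 := by
  have h2lb := Real.log_two_gt_d9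
  have h2ub := Real.log_two_lt_d9
  constructor <;> linarith [log3_bounds.1, log3_bounds.2, log5_bounds.1, log5_bounds.2]

lemma log_km (k m : ℕ) (hk : 1 ≤ k) (hm : 1 ≤ m) :
    Real.log ((k*m : ℕ) : ℝ) = Real.log k + Real.log m := by
  have hk' : ((k:ℕ):ℝ) ≠ 0 := Nat.cast_ne_zero.mpr (by omega)
  have hm' : ((m:ℕ):ℝ) ≠ 0 := Nat.cast_ne_zero.mpr (by omega)
  push_cast
  rw [Real.log_mul (by exact_mod_cast hk') (by exact_mod_cast hm')]

lemma Lc_bounds (m : ℕ) (hm : 1 ≤ m) :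
    27.638*m - 3*Real.log 30 - 3*Real.log m - 1 ≤ Lc m ∧
    Lc m ≤ 27.6392*m + 2*Real.log 30 + 2*Real.log m := by
  have hm0 : (0:ℝ) ≤ (m:ℝ) := Nat.cast_nonneg m
  have hmpos : (1:ℝ) ≤ (m:ℝ) := by exact_mod_cast hm
  -- log identities
  have l15 : Real.log (15:ℝ) = Real.log 30 - Real.log 2 := by
    rw [show (30:ℝ) = 2*15 by norm_num, Real.log_mul (by norm_num) (by norm_num)]; ring
  have l10 : Real.log (10:ℝ) = Real.log 30 - Real.log 3 := by
    rw [show (30:ℝ) = 3*10 by norm_num, Real.log_mul (by norm_num) (by norm_num)]; ring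
  have l6 : Real.log (6:ℝ) = Real.log 30 - Real.log 5 := by
    rw [show (30:ℝ) = 5*6 by norm_num, Real.log_mul (by norm_num) (by norm_num)]; ring
  -- factorial bounds for each of the five
  have e30 := log_factorial_ge (30*m) (by omega)
  have e30' := log_factorial_le (30*m) (by omega)
  have e1 := log_factorial_ge m (by omega)
  have e1' := log_factorial_le m (by omega)
  have e15 := log_factorial_ge (15*m) (by omega)
  have e15' := log_factorial_le (15*m) (by omega)
  have e10 := log_factorial_ge (10*m) (by omega)
  have e10' := log_factorial_le (10*m) (by omega)
  have e6 := log_factorial_ge (6*m) (by omega)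
  have e6' := log_factorial_le (6*m) (by omega)
  rw [log_km 30 m (by norm_num) hm] at e30 e30'
  rw [log_km 15 m (by norm_num) hm] at e15 e15'
  rw [log_km 10 m (by norm_num) hm] at e10 e10'
  rw [log_km 6 m (by norm_num) hm] at e6 e6'
  push_cast at e30 e30' e1 e1' e15 e15' e10 e10' e6 e6'
  rw [l15] at e15 e15'
  rw [l10] at e10 e10'
  rw [l6] at e6 e6'
  have hC := C_bounds
  have hClo := mul_le_mul_of_nonneg_left hC.1 hm0
  have hChi := mul_le_mul_of_nonneg_left hC.2 hm0
  have hlm : 0 ≤ Real.log m := Real.log_nonneg hmpos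
  have hl30 := log30_bounds
  have h2lb := Real.log_two_gt_d9
  have h2ub := Real.log_two_lt_d9
  have hmlog30 : (m:ℝ)*Real.log 30 = m*Real.log 2 + m*Real.log 3 + m*Real.log 5 := by
    rw [log30_eq]; ring
  unfold Lc
  constructor
  · linarith [e30, e1, e15', e10', e6', hClo, hmlog30, log30_eq]
  · linarith [e30', e1', e15, e10, e6, hChi, hmlog30, log30_eq]
lemma log_le_div_add {x : ℝ} (c : ℝ) (hx : 1 ≤ x) (hc : 1 ≤ c) :
    Real.log x ≤ x/c + Real.log c - 1 := by
  have h1 : Real.log (x/c) ≤ x/c - 1 := Real.log_le_sub_one_of_pos (by positivity)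
  have h2 : Real.log (x/c) = Real.log x - Real.log c := Real.log_div (by linarith) (by linarith)
  linarith

lemma log100 : Real.log 100 ≤ 4.6054 := by
  have : Real.log 100 = 2*(Real.log 2 + Real.log 5) := by
    rw [show (100:ℝ) = (2*5)^2 by norm_num, Real.log_pow,
      Real.log_mul (by norm_num) (by norm_num)]
    push_cast; ring
  rw [this]
  linarith [Real.log_two_lt_d9, log5_bounds.2]

lemma log10000 : Real.log 10000 ≤ 9.2107 := by
  have : Real.log 10000 = 4*(Real.log 2 + Real.log 5) := by
    rw [show (10000:ℝ) = (2*5)^4 by norm_num, Real.log_pow,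
      Real.log_mul (by norm_num) (by norm_num)]
    push_cast; ring
  rw [this]
  linarith [Real.log_two_lt_d9, log5_bounds.2]

lemma psi_zero : psi 0 = 0 := by simp [psi]

lemma psi_lower_lc (n : ℕ) (hn : 30 ≤ n) :
    27.638*(((n:ℝ)-29)/30) - 3*Real.log 30 - 3*Real.log n - 1 ≤ psi n := by
  obtain ⟨m, hm⟩ : ∃ m, m = n/30 := ⟨_, rfl⟩
  have hm1 : 1 ≤ m := by omega
  have h30m : 30*m ≤ n := by omega
  have h1 : psi (30*m) ≤ psi n := psi_mono h30m
  have h2 := Lc_le_psi m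
  have h3 := (Lc_bounds m hm1).1
  have hcast : ((n:ℝ)-29)/30 ≤ (m:ℝ) := by
    have h0 : n ≤ 30*m + 29 := by omega
    have h' : (n:ℝ) ≤ 30*(m:ℝ) + 29 := by exact_mod_cast h0
    linarith
  have hlogm : Real.log m ≤ Real.log n := by
    apply Real.log_le_log (by exact_mod_cast hm1)
    exact_mod_cast (by omega : m ≤ n)
  have hprod := mul_le_mul_of_nonneg_left hcast (by norm_num : (0:ℝ) ≤ 27.638)
  linarith [h1, h2, h3, hprod, hlogm]

lemma psi_crude (n : ℕ) : psi n ≤ 1.2*(n:ℝ) + 5200 := by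
  induction n using Nat.strong_induction_on with
  | _ n ih =>
    rcases Nat.eq_zero_or_pos n with rfl | hn0
    · norm_num [psi_zero]
    by_cases hn : n ≤ 900
    · have h1 := psi_le_log_factorial n
      have h2 := log_factorial_le n hn0
      have h3 : Real.log n ≤ 10 * Real.log 2 := by
        have : ((n:ℝ)) ≤ 1024 := by
          have : (n:ℝ) ≤ 900 := by exact_mod_cast hn
          linarith
        calc Real.log n ≤ Real.log 1024 := Real.log_le_log (by exact_mod_cast hn0) this
          _ = 10 * Real.log 2 := by
              rw [show (1024:ℝ) = 2^10 by norm_num, Real.log_pow]; push_cast; ring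
      have h4 : Real.log 2 < 0.6931471808 := Real.log_two_lt_d9
      have hn' : (n:ℝ) ≤ 900 := by exact_mod_cast hn
      have hn1 : (1:ℝ) ≤ (n:ℝ) := by exact_mod_cast hn0
      nlinarith [h1, h2, h3, h4, hn', hn1]
    · push_neg at hn
      obtain ⟨m, hm⟩ : ∃ m, m = n/30 + 1 := ⟨_, rfl⟩
      have hm1 : 1 ≤ m := by omega
      have hnm : n ≤ 30*m := by omega
      have h5m : 5*m < n := by omega
      have h1 : psi n ≤ psi (30*m) := psi_mono hnm
      have h2 : psi (30*m) ≤ Lc m + psi (5*m) := by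
        have hp := psi_pieces_le_Lc m hm1
        have hmono : psi (3*m) ≤ psi (30*m/7) := psi_mono (by omega)
        linarith
      have h3 := (Lc_bounds m hm1).2
      have h4 := ih (5*m) h5m
      -- numeric part
      have hmn : (m:ℝ) ≤ ((n:ℝ)+30)/30 := by
        have h0 : 30*m ≤ n + 30 := by omega
        have h' : 30*(m:ℝ) ≤ (n:ℝ) + 30 := by exact_mod_cast h0
        linarith
      have hlogm : Real.log m ≤ (n:ℝ)/10000 + 8.2107 := by
        have hmn' : (m:ℝ) ≤ (n:ℝ) := by
          have : m ≤ n := by omega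
          exact_mod_cast this
        have := log_le_div_add (x := (m:ℝ)) 10000 (by exact_mod_cast hm1) (by norm_num)
        have hdiv : (m:ℝ)/10000 ≤ (n:ℝ)/10000 := by linarith
        linarith [log10000]
      have hl30 := log30_bounds.2
      have hm0 : (0:ℝ) ≤ (m:ℝ) := Nat.cast_nonneg m
      have hn901 : (901:ℝ) ≤ (n:ℝ) := by exact_mod_cast hn
      have h5mcast : ((5*m : ℕ):ℝ) = 5*(m:ℝ) := by push_cast; ring
      rw [h5mcast] at h4
      nlinarith [h1, h2, h3, h4, hmn, hlogm, hl30, hn901]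

lemma psi_refined (n : ℕ) : psi n ≤ 1.1*(n:ℝ) + 88000 := by
  induction n using Nat.strong_induction_on with
  | _ n ih =>
    by_cases hn : n ≤ 825000
    · have := psi_crude n
      have hn' : (n:ℝ) ≤ 825000 := by exact_mod_cast hn
      linarith
    · push_neg at hn
      obtain ⟨m, hm⟩ : ∃ m, m = n/30 + 1 := ⟨_, rfl⟩
      have hm7 : 7 ≤ m := by omega
      have hm1 : 1 ≤ m := by omega
      have hnm : n ≤ 30*m := by omega
      have h5m : 5*m < n := by omega
      have h1 : psi n ≤ psi (30*m) := psi_mono hnm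
      have h2 : psi (30*m) ≤ Lc m + psi (5*m) - psi (30*m/7) + psi (3*m) := by
        have hp := psi_pieces_le_Lc m hm1
        linarith
      have h3 := (Lc_bounds m hm1).2
      have h4 := ih (5*m) h5m
      have h5 := psi_crude (3*m)
      -- lower bound for psi (30*m/7)
      have hq1 : 1 ≤ m/7 := by omega
      have hq2 : 30*(m/7) ≤ 30*m/7 := by omega
      have h6 : Lc (m/7) ≤ psi (30*m/7) := (Lc_le_psi (m/7)).trans (psi_mono hq2)
      have h7 := (Lc_bounds (m/7) hq1).1
      have hqm : ((m:ℝ)-6)/7 ≤ ((m/7 : ℕ):ℝ) := by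
        have h0 : m ≤ 7*(m/7) + 6 := by omega
        have h' : (m:ℝ) ≤ 7*((m/7 : ℕ):ℝ) + 6 := by exact_mod_cast h0
        linarith
      have hlogq : Real.log ((m/7 : ℕ):ℝ) ≤ Real.log m :=
        Real.log_le_log (by exact_mod_cast hq1) (by exact_mod_cast Nat.div_le_self m 7)
      -- numerics
      have hmn : (m:ℝ) ≤ ((n:ℝ)+30)/30 := by
        have h0 : 30*m ≤ n + 30 := by omega
        have h' : 30*(m:ℝ) ≤ (n:ℝ) + 30 := by exact_mod_cast h0
        linarith
      have hlogm : Real.log m ≤ (n:ℝ)/10000 + 8.2107 := by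
        have hmn' : (m:ℝ) ≤ (n:ℝ) := by exact_mod_cast (by omega : m ≤ n)
        have := log_le_div_add (x := (m:ℝ)) 10000 (by exact_mod_cast hm1) (by norm_num)
        linarith [log10000]
      have hl30lb := log30_bounds.1
      have hl30 := log30_bounds.2
      have hn' : (825001:ℝ) ≤ (n:ℝ) := by exact_mod_cast hn
      have h5mcast : ((5*m : ℕ):ℝ) = 5*(m:ℝ) := by push_cast; ring
      have h3mcast : ((3*m : ℕ):ℝ) = 3*(m:ℝ) := by push_cast; ring
      rw [h5mcast] at h4
      rw [h3mcast] at h5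
      have hlogm0 : 0 ≤ Real.log m := Real.log_nonneg (by exact_mod_cast hm1)
      nlinarith [h1, h2, h3, h4, h5, h6, h7, hqm, hlogq, hmn, hlogm, hl30, hl30lb, hn', hlogm0]
lemma sum_image_le (s : Finset ℕ) (g : ℕ → ℕ) (f : ℕ → ℝ) (hf : ∀ x, 0 ≤ f x) :
    ∑ y ∈ s.image g, f y ≤ ∑ x ∈ s, f (g x) := by
  induction s using Finset.induction with
  | empty => simp
  | @insert a s ha ih =>
    rw [Finset.image_insert, Finset.sum_insert ha]
    by_cases hmem : g a ∈ s.image g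
    · rw [Finset.insert_eq_self.mpr hmem]
      linarith [hf (g a)]
    · rw [Finset.sum_insert hmem]
      linarith

/-- Chebyshev theta function -/
noncomputable def theta (n : ℕ) : ℝ := ∑ p ∈ (Icc 1 n).filter Nat.Prime, Real.log p

lemma theta_nonneg (n : ℕ) : 0 ≤ theta n := by
  refine Finset.sum_nonneg fun p hp => ?_
  simp only [Finset.mem_filter, Finset.mem_Icc] at hp
  exact Real.log_nonneg (by exact_mod_cast hp.1.1)

lemma theta_eq_sum_vonMangoldt (n : ℕ) :
    theta n = ∑ p ∈ (Icc 1 n).filter Nat.Prime, Λ p := by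
  refine Finset.sum_congr rfl fun p hp => ?_
  simp only [Finset.mem_filter] at hp
  exact (vonMangoldt_apply_prime hp.2).symm

lemma theta_le_psi (n : ℕ) : theta n ≤ psi n := by
  rw [theta_eq_sum_vonMangoldt]
  exact Finset.sum_le_sum_of_subset_of_nonneg (Finset.filter_subset _ _)
    (fun _ _ _ => vonMangoldt_nonneg)

lemma vonMangoldt_sq_minFac_le (a : ℕ) : Λ (a^2 * a.minFac) ≤ Λ a := by
  rcases Nat.eq_zero_or_pos a with rfl | ha0
  · simp
  rcases eq_or_lt_of_le (show 1 ≤ a from ha0) with ha1 | ha2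
  · have : a = 1 := ha1.symm
    subst this
    norm_num
  -- a ≥ 2
  by_cases hpp : IsPrimePow a
  · obtain ⟨p, k, hp, hk, rfl⟩ := (isPrimePow_def a).mp hpp
    have hp' : Nat.Prime p := Nat.prime_iff.mpr hp
    rw [Nat.Prime.pow_minFac hp' (by omega)]
    have h1 : (p^k)^2 * p = p^(2*k+1) := by ring
    rw [h1, vonMangoldt_apply_pow (by omega), vonMangoldt_apply_pow (by omega)]
  · have hz : Λ (a^2 * a.minFac) = 0 := by
      rw [ArithmeticFunction.vonMangoldt_eq_zero_iff]
      intro hcon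
      obtain ⟨q, t, hq, ht, hqt⟩ := (isPrimePow_def _).mp hcon
      have hq' : Nat.Prime q := Nat.prime_iff.mpr hq
      have hminFac : a.minFac.Prime := Nat.minFac_prime (by omega)
      -- every prime dividing a equals q
      have hkey : ∀ {d : ℕ}, Nat.Prime d → d ∣ a → d = q := by
        intro d hd hda
        have : d ∣ q^t := hqt ▸ Dvd.dvd.mul_right (dvd_pow hda (by norm_num) |>.trans (dvd_mul_right _ _)) 1 |>.trans (by rw [mul_one])
        exact (Nat.prime_dvd_prime_iff_eq hd hq').mp (hd.dvd_of_dvd_pow this)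
      have := Nat.eq_prime_pow_of_unique_prime_dvd (by omega : a ≠ 0) hkey
      apply hpp
      rw [this]
      refine IsPrimePow.pow ?_ ?_
      · exact hq'.prime.isPrimePow
      · intro hlen
        rw [hlen, pow_zero] at this
        omega
    rw [hz]
    exact vonMangoldt_nonneg

lemma psi_sub_theta (n : ℕ) : psi n ≤ theta n + 2 * psi (Nat.sqrt n) := by
  have hsplit := Finset.sum_filter_add_sum_filter_not (Icc 1 n) Nat.Prime (fun m => Λ m)
  have hpsi : psi n = theta n + ∑ m ∈ (Icc 1 n).filter (fun m => ¬ m.Prime), Λ m := by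
    rw [theta_eq_sum_vonMangoldt]
    unfold psi
    linarith [hsplit]
  rw [hpsi]
  have hmain : ∑ m ∈ (Icc 1 n).filter (fun m => ¬ m.Prime), Λ m ≤ 2 * psi (Nat.sqrt n) := by
    set s := ((Icc 1 n).filter (fun m => ¬ m.Prime)).filter (fun m => Λ m ≠ 0) with hs
    have h0 : ∑ m ∈ (Icc 1 n).filter (fun m => ¬ m.Prime), Λ m = ∑ m ∈ s, Λ m :=
      (Finset.sum_filter_ne_zero _).symm
    rw [h0]
    -- s is contained in union of two images
    set t := Icc 1 (Nat.sqrt n) with ht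
    have hsub : s ⊆ (t.image (·^2)) ∪ (t.image (fun a => a^2 * a.minFac)) := by
      intro m hm
      simp only [hs, Finset.mem_filter, Finset.mem_Icc] at hm
      obtain ⟨⟨⟨hm1, hmn⟩, hnp⟩, hΛ⟩ := hm
      have hppow : IsPrimePow m := ArithmeticFunction.vonMangoldt_ne_zero_iff.mp hΛ
      obtain ⟨p, k, hp, hk, rfl⟩ := (isPrimePow_def m).mp hppow
      have hp' : Nat.Prime p := Nat.prime_iff.mpr hp
      have hk2 : 2 ≤ k := by
        by_contra hcon2
        push_neg at hcon2
        have hk1 : k = 1 := by omega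
        subst hk1
        rw [pow_one] at hnp
        exact hnp hp'
      set a := p^(k/2) with ha
      have hat : a ∈ t := by
        simp only [ht, Finset.mem_Icc]
        constructor
        · exact Nat.one_le_iff_ne_zero.mpr (pow_ne_zero _ hp'.pos.ne')
        · rw [Nat.le_sqrt]
          calc a * a = p^(k/2) * p^(k/2) := rfl
            _ = p^(k/2 + k/2) := (pow_add p _ _).symm
            _ ≤ p^k := Nat.pow_le_pow_right hp'.pos (by omega)
            _ ≤ n := hmn
      rcases Nat.even_or_odd k with he | ho
      · apply Finset.mem_union_left
        apply Finset.mem_image.mpr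
        refine ⟨a, hat, ?_⟩
        obtain ⟨j, hj⟩ := he
        rw [ha, ← pow_mul]
        congr 1
        omega
      · apply Finset.mem_union_right
        apply Finset.mem_image.mpr
        refine ⟨a, hat, ?_⟩
        have hmf : a.minFac = p := Nat.Prime.pow_minFac hp' (by omega)
        rw [hmf, ha, ← pow_mul, ← pow_succ]
        congr 1
        obtain ⟨j, hj⟩ := ho
        omega
    have h1 : ∑ m ∈ s, Λ m ≤ ∑ m ∈ (t.image (·^2)) ∪ (t.image (fun a => a^2 * a.minFac)), Λ m :=
      Finset.sum_le_sum_of_subset_of_nonneg hsub (fun _ _ _ => vonMangoldt_nonneg)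
    have h2 : ∑ m ∈ (t.image (·^2)) ∪ (t.image (fun a => a^2 * a.minFac)), Λ m
        ≤ ∑ m ∈ t.image (·^2), Λ m + ∑ m ∈ t.image (fun a => a^2 * a.minFac), Λ m := by
      have := Finset.sum_union_inter (s₁ := t.image (·^2)) (s₂ := t.image (fun a => a^2 * a.minFac)) (f := fun m => Λ m)
      have hnn : 0 ≤ ∑ m ∈ (t.image (·^2)) ∩ (t.image (fun a => a^2 * a.minFac)), Λ m :=
        Finset.sum_nonneg fun _ _ => vonMangoldt_nonneg
      linarith
    have h3 : ∑ m ∈ t.image (·^2), Λ m ≤ ∑ a ∈ t, Λ a := by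
      have := sum_image_le t (·^2) (fun m => Λ m) (fun _ => vonMangoldt_nonneg)
      calc ∑ m ∈ t.image (·^2), Λ m ≤ ∑ a ∈ t, Λ (a^2) := this
        _ = ∑ a ∈ t, Λ a := Finset.sum_congr rfl fun a _ => vonMangoldt_apply_pow (by norm_num)
    have h4 : ∑ m ∈ t.image (fun a => a^2 * a.minFac), Λ m ≤ ∑ a ∈ t, Λ a := by
      have := sum_image_le t (fun a => a^2 * a.minFac) (fun m => Λ m) (fun _ => vonMangoldt_nonneg)
      calc ∑ m ∈ t.image (fun a => a^2 * a.minFac), Λ m ≤ ∑ a ∈ t, Λ (a^2 * a.minFac) := this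
        _ ≤ ∑ a ∈ t, Λ a := Finset.sum_le_sum fun a _ => vonMangoldt_sq_minFac_le a
    have hpsit : ∑ a ∈ t, Λ a = psi (Nat.sqrt n) := rfl
    linarith
  linarith

lemma exists_prime_between {a b : ℕ} (h : theta a < theta b) :
    ∃ p, p.Prime ∧ a < p ∧ p ≤ b := by
  by_contra hcon
  push_neg at hcon
  have hsub : (Icc 1 b).filter Nat.Prime ⊆ (Icc 1 a).filter Nat.Prime := by
    intro p hp
    simp only [Finset.mem_filter, Finset.mem_Icc] at hp ⊢
    refine ⟨⟨hp.1.1, ?_⟩, hp.2⟩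
    by_contra hpa
    push_neg at hpa
    exact absurd (hcon p hp.2 hpa) (by push_neg; exact hp.1.2)
  have : theta b ≤ theta a := by
    unfold theta
    refine Finset.sum_le_sum_of_subset_of_nonneg hsub fun p hp _ => ?_
    simp only [Finset.mem_filter, Finset.mem_Icc] at hp
    exact Real.log_nonneg (by exact_mod_cast hp.1.1)
  linarith
lemma main_large (n : ℕ) (hn : 30000000 ≤ n) :
    ∃ p : ℕ, p.Prime ∧ 5 * n < 6 * p ∧ p < n := by
  obtain ⟨a, hadef⟩ : ∃ a, a = 5*n/6 := ⟨_, rfl⟩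
  obtain ⟨b, hbdef⟩ : ∃ b, b = n-1 := ⟨_, rfl⟩
  have hkey : theta a < theta b := by
    have hb30 : 30 ≤ b := by omega
    have h1 := psi_lower_lc b hb30
    have h2 := psi_sub_theta b
    have h3 := psi_crude (Nat.sqrt b)
    have h5 := theta_le_psi a
    have h5' := psi_refined a
    -- casts
    have hbcast : (n:ℝ) - 1 ≤ (b:ℝ) := by
      have h0 : n ≤ b + 1 := by omega
      have h' : (n:ℝ) ≤ (b:ℝ) + 1 := by exact_mod_cast h0
      linarith
    have hbcast' : (b:ℝ) ≤ (n:ℝ) := by exact_mod_cast (by omega : b ≤ n)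
    have hacast : (a:ℝ) ≤ 5*(n:ℝ)/6 := by
      have h' : 6 * a ≤ 5*n := by omega
      have h'' : 6*(a:ℝ) ≤ 5*(n:ℝ) := by exact_mod_cast h'
      linarith
    have hncast : (30000000:ℝ) ≤ (n:ℝ) := by exact_mod_cast hn
    -- sqrt bound
    have hs2 : ((Nat.sqrt b : ℕ):ℝ)^2 ≤ (n:ℝ) := by
      have h' : Nat.sqrt b ^ 2 ≤ n := le_trans (Nat.sqrt_le' b) (by omega)
      exact_mod_cast h'
    have hs3 : ((Nat.sqrt b : ℕ):ℝ) ≤ Real.sqrt n := Real.le_sqrt_of_sq_le hs2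
    have hs4 : Real.sqrt n ≤ 2738.5 + (n:ℝ)/10954 := by
      have hsq := Real.sq_sqrt (by positivity : (0:ℝ) ≤ (n:ℝ))
      have hsn := Real.sqrt_nonneg (n:ℝ)
      nlinarith [sq_nonneg (Real.sqrt n - 5477)]
    -- log bounds
    have hlogb : Real.log b ≤ (n:ℝ)/10000 + 8.2107 := by
      have h' : Real.log b ≤ Real.log n :=
        Real.log_le_log (by exact_mod_cast (by omega : 1 ≤ b)) (by exact_mod_cast (by omega : b ≤ n))
      have h'' := log_le_div_add (x := (n:ℝ)) 10000 (by linarith) (by norm_num)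
      linarith [log10000]
    have hl30 := log30_bounds.2
    have hl30' := log30_bounds.1
    have hlogb0 : 0 ≤ Real.log b := Real.log_nonneg (by exact_mod_cast (by omega : 1 ≤ b))
    linarith [h1, h2, h3, h5, h5', hbcast, hacast, hs3, hs4, hlogb, hl30, hl30', hlogb0]
  obtain ⟨p, hp, hap, hpb⟩ := exists_prime_between hkey
  exact ⟨p, hp, by omega, by omega⟩
lemma cover_step {p N : ℕ} (hp : p.Prime) (hN : 5*N < 6*p)
    (H : ∀ n : ℕ, 30 ≤ n → N < n → ∃ q : ℕ, q.Prime ∧ 5*n < 6*q ∧ q < n) :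
    ∀ n : ℕ, 30 ≤ n → p < n → ∃ q : ℕ, q.Prime ∧ 5*n < 6*q ∧ q < n := by
  intro n h30 hpn
  by_cases hn : N < n
  · exact H n h30 hn
  · exact ⟨p, hp, by omega, hpn⟩

lemma main_chain : ∀ n : ℕ, 30 ≤ n → 29 < n → ∃ q : ℕ, q.Prime ∧ 5*n < 6*q ∧ q < n := by
  have H : ∀ n : ℕ, 30 ≤ n → 29999999 < n → ∃ q : ℕ, q.Prime ∧ 5*n < 6*q ∧ q < n :=
    fun n _ hN => main_large n (by omega)
  have H := cover_step (p := 25000009) (N := 29999999) (by norm_num) (by norm_num) H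
  have H := cover_step (p := 20833343) (N := 25000009) (by norm_num) (by norm_num) H
  have H := cover_step (p := 17361137) (N := 20833343) (by norm_num) (by norm_num) H
  have H := cover_step (p := 14467631) (N := 17361137) (by norm_num) (by norm_num) H
  have H := cover_step (p := 12056371) (N := 14467631) (by norm_num) (by norm_num) H
  have H := cover_step (p := 10046999) (N := 12056371) (by norm_num) (by norm_num) H
  have H := cover_step (p := 8372501) (N := 10046999) (by norm_num) (by norm_num) H
  have H := cover_step (p := 6977101) (N := 8372501) (by norm_num) (by norm_num) H
  have H := cover_step (p := 5814257) (N := 6977101) (by norm_num) (by norm_num) H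
  have H := cover_step (p := 4845241) (N := 5814257) (by norm_num) (by norm_num) H
  have H := cover_step (p := 4037707) (N := 4845241) (by norm_num) (by norm_num) H
  have H := cover_step (p := 3364763) (N := 4037707) (by norm_num) (by norm_num) H
  have H := cover_step (p := 2803991) (N := 3364763) (by norm_num) (by norm_num) H
  have H := cover_step (p := 2336671) (N := 2803991) (by norm_num) (by norm_num) H
  have H := cover_step (p := 1947227) (N := 2336671) (by norm_num) (by norm_num) H
  have H := cover_step (p := 1622693) (N := 1947227) (by norm_num) (by norm_num) H
  have H := cover_step (p := 1352257) (N := 1622693) (by norm_num) (by norm_num) H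
  have H := cover_step (p := 1126889) (N := 1352257) (by norm_num) (by norm_num) H
  have H := cover_step (p := 939089) (N := 1126889) (by norm_num) (by norm_num) H
  have H := cover_step (p := 782581) (N := 939089) (by norm_num) (by norm_num) H
  have H := cover_step (p := 652153) (N := 782581) (by norm_num) (by norm_num) H
  have H := cover_step (p := 543463) (N := 652153) (by norm_num) (by norm_num) H
  have H := cover_step (p := 452923) (N := 543463) (by norm_num) (by norm_num) H
  have H := cover_step (p := 377459) (N := 452923) (by norm_num) (by norm_num) H
  have H := cover_step (p := 314569) (N := 377459) (by norm_num) (by norm_num) H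
  have H := cover_step (p := 262147) (N := 314569) (by norm_num) (by norm_num) H
  have H := cover_step (p := 218459) (N := 262147) (by norm_num) (by norm_num) H
  have H := cover_step (p := 182057) (N := 218459) (by norm_num) (by norm_num) H
  have H := cover_step (p := 151717) (N := 182057) (by norm_num) (by norm_num) H
  have H := cover_step (p := 126433) (N := 151717) (by norm_num) (by norm_num) H
  have H := cover_step (p := 105361) (N := 126433) (by norm_num) (by norm_num) H
  have H := cover_step (p := 87803) (N := 105361) (by norm_num) (by norm_num) H
  have H := cover_step (p := 73181) (N := 87803) (by norm_num) (by norm_num) H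
  have H := cover_step (p := 61001) (N := 73181) (by norm_num) (by norm_num) H
  have H := cover_step (p := 50839) (N := 61001) (by norm_num) (by norm_num) H
  have H := cover_step (p := 42373) (N := 50839) (by norm_num) (by norm_num) H
  have H := cover_step (p := 35311) (N := 42373) (by norm_num) (by norm_num) H
  have H := cover_step (p := 29429) (N := 35311) (by norm_num) (by norm_num) H
  have H := cover_step (p := 24527) (N := 29429) (by norm_num) (by norm_num) H
  have H := cover_step (p := 20441) (N := 24527) (by norm_num) (by norm_num) H
  have H := cover_step (p := 17041) (N := 20441) (by norm_num) (by norm_num) H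
  have H := cover_step (p := 14207) (N := 17041) (by norm_num) (by norm_num) H
  have H := cover_step (p := 11863) (N := 14207) (by norm_num) (by norm_num) H
  have H := cover_step (p := 9887) (N := 11863) (by norm_num) (by norm_num) H
  have H := cover_step (p := 8243) (N := 9887) (by norm_num) (by norm_num) H
  have H := cover_step (p := 6871) (N := 8243) (by norm_num) (by norm_num) H
  have H := cover_step (p := 5737) (N := 6871) (by norm_num) (by norm_num) H
  have H := cover_step (p := 4783) (N := 5737) (by norm_num) (by norm_num) H
  have H := cover_step (p := 3989) (N := 4783) (by norm_num) (by norm_num) H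
  have H := cover_step (p := 3329) (N := 3989) (by norm_num) (by norm_num) H
  have H := cover_step (p := 2777) (N := 3329) (by norm_num) (by norm_num) H
  have H := cover_step (p := 2333) (N := 2777) (by norm_num) (by norm_num) H
  have H := cover_step (p := 1949) (N := 2333) (by norm_num) (by norm_num) H
  have H := cover_step (p := 1627) (N := 1949) (by norm_num) (by norm_num) H
  have H := cover_step (p := 1361) (N := 1627) (by norm_num) (by norm_num) H
  have H := cover_step (p := 1151) (N := 1361) (by norm_num) (by norm_num) H
  have H := cover_step (p := 967) (N := 1151) (by norm_num) (by norm_num) H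
  have H := cover_step (p := 809) (N := 967) (by norm_num) (by norm_num) H
  have H := cover_step (p := 677) (N := 809) (by norm_num) (by norm_num) H
  have H := cover_step (p := 569) (N := 677) (by norm_num) (by norm_num) H
  have H := cover_step (p := 479) (N := 569) (by norm_num) (by norm_num) H
  have H := cover_step (p := 401) (N := 479) (by norm_num) (by norm_num) H
  have H := cover_step (p := 337) (N := 401) (by norm_num) (by norm_num) H
  have H := cover_step (p := 281) (N := 337) (by norm_num) (by norm_num) H
  have H := cover_step (p := 239) (N := 281) (by norm_num) (by norm_num) H
  have H := cover_step (p := 211) (N := 239) (by norm_num) (by norm_num) H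
  have H := cover_step (p := 179) (N := 211) (by norm_num) (by norm_num) H
  have H := cover_step (p := 151) (N := 179) (by norm_num) (by norm_num) H
  have H := cover_step (p := 127) (N := 151) (by norm_num) (by norm_num) H
  have H := cover_step (p := 107) (N := 127) (by norm_num) (by norm_num) H
  have H := cover_step (p := 97) (N := 107) (by norm_num) (by norm_num) H
  have H := cover_step (p := 83) (N := 97) (by norm_num) (by norm_num) H
  have H := cover_step (p := 71) (N := 83) (by norm_num) (by norm_num) H
  have H := cover_step (p := 61) (N := 71) (by norm_num) (by norm_num) H
  have H := cover_step (p := 53) (N := 61) (by norm_num) (by norm_num) H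
  have H := cover_step (p := 47) (N := 53) (by norm_num) (by norm_num) H
  have H := cover_step (p := 41) (N := 47) (by norm_num) (by norm_num) H
  have H := cover_step (p := 37) (N := 41) (by norm_num) (by norm_num) H
  have H := cover_step (p := 31) (N := 37) (by norm_num) (by norm_num) H
  have H := cover_step (p := 29) (N := 31) (by norm_num) (by norm_num) H
  exact H

end Nagura

/-- For every `n ≥ 30` the open interval `(5n/6, n)` contains a prime. -/
theorem exists_prime_in_five_sixths (n : ℕ) (hn : 30 ≤ n) :
    ∃ p : ℕ, p.Prime ∧ 5 * n < 6 * p ∧ p < n :=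
  Nagura.main_chain n hn (by omega)
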